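/- Let (X, σ) be a minimal subshift and let U ⊆ X be a nonempty clopen set such that σ^{−1}(U), U, σ(U) are pairwise disjoint. Define f_U ∈ Homeo(X) by f_U(y) = σ(y) if y ∈ U ∪ σ^{−1}(U), f_U(y) = σ^{−2}(y) if y ∈ σ(U), and f_U(y) = y otherwise. Then f_U is a well-defined element of the topological full group ⟦σ⟧, and f_U lies in the derived (commutator) subgroup ⟦σ⟧′. Specifically, f_U = f_U^{−1} h_U^{−1} f_U h_U, where h_U swaps σ^{−1}(U) and U via σ^{±1} and is the identity elsewhere. -/

import Mathlib

/-- The set of `n`-factors of a two-sided infinite word `w`. -/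
def factorsZ {A : Type*} (w : ℤ → A) (n : ℕ) : Set (Fin n → A) :=
  {u | ∃ k : ℤ, ∀ i : Fin n, u i = w (k + (i : ℤ))}

/-- The complexity function of a two-sided infinite word. -/
noncomputable def complexityZ {A : Type*} (w : ℤ → A) (n : ℕ) : ℕ :=
  Nat.card (factorsZ w n)

/-- `u` occurs in the length-`M` window of `w` starting at `k`. -/
def OccursIn {A : Type*} (w : ℤ → A) {n : ℕ} (u : Fin n → A) (k : ℤ) (M : ℕ) : Prop :=
  ∃ j : ℤ, k ≤ j ∧ j + (n : ℤ) ≤ k + (M : ℤ) ∧ ∀ i : Fin n, u i = w (j + (i : ℤ))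

/-- `M` is a recurrence bound for length-`n` factors of `w`. -/
def IsRecurrenceBound {A : Type*} (w : ℤ → A) (n M : ℕ) : Prop :=
  ∀ u ∈ factorsZ w n, ∀ k : ℤ, OccursIn w u k M

def UniformlyRecurrent {A : Type*} (w : ℤ → A) : Prop :=
  ∀ n : ℕ, ∃ M : ℕ, IsRecurrenceBound w n M

/-- The recurrence function of `w`. -/
noncomputable def recurrenceFn {A : Type*} (w : ℤ → A) (n : ℕ) : ℕ :=
  sInf {M | IsRecurrenceBound w n M}

def PeriodicWord {A : Type*} (w : ℤ → A) : Prop :=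
  ∃ k : ℤ, 1 ≤ k ∧ ∀ i : ℤ, w (i + k) = w i

/-- The `i`-th power of the shift: `(shiftFun i y) t = y (t + i)`. -/
def shiftFun {A : Type*} (i : ℤ) (y : ℤ → A) : ℤ → A := fun t => y (t + i)

/-- Image of a set of words under the `i`-th power of the shift. -/
def shiftSet {A : Type*} (i : ℤ) (W : Set (ℤ → A)) : Set (ℤ → A) := shiftFun i '' W
/-- The group of self-homeomorphisms of a space, under composition
(`(g * h) x = g (h x)`). -/
instance homeomorphGroup {Y : Type*} [TopologicalSpace Y] : Group (Y ≃ₜ Y) where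
  mul g h := h.trans g
  one := Homeomorph.refl Y
  inv := Homeomorph.symm
  mul_assoc _ _ _ := Homeomorph.ext fun _ => rfl
  one_mul _ := Homeomorph.ext fun _ => rfl
  mul_one _ := Homeomorph.ext fun _ => rfl
  inv_mul_cancel g := Homeomorph.ext fun y => g.symm_apply_apply y

/-- Membership in the topological full group of the shift on `X`: `g` admits a continuous
orbit cocycle `f` with `g p = σ^(f p) p`. -/
def InFullGroup {A : Type*} [TopologicalSpace A] (X : Set (ℤ → A)) (g : ↥X ≃ₜ ↥X) : Prop :=
  ∃ f : ↥X → ℤ, Continuous f ∧ ∀ p : ↥X, ((g p : ℤ → A)) = shiftFun (f p) (p : ℤ → A)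

/-- `g` is the homeomorphism `f_W`: it acts as `σ` on `W ∪ σ⁻¹(W)`, as `σ⁻²` on `σ(W)`,
and as the identity elsewhere. -/
def IsFOn {A : Type*} [TopologicalSpace A] (X W : Set (ℤ → A)) (g : ↥X ≃ₜ ↥X) : Prop :=
  ∀ p : ↥X,
    ((p : ℤ → A) ∈ W ∪ shiftSet (-1) W → ((g p : ℤ → A)) = shiftFun 1 (p : ℤ → A)) ∧
    ((p : ℤ → A) ∈ shiftSet 1 W → ((g p : ℤ → A)) = shiftFun (-2) (p : ℤ → A)) ∧
    ((p : ℤ → A) ∉ W ∪ shiftSet (-1) W ∪ shiftSet 1 W → g p = p)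

/-- `h` is the homeomorphism `h_W`: it swaps `σ⁻¹(W)` and `W` via `σ^{±1}` and is the
identity elsewhere. -/
def IsHOn {A : Type*} [TopologicalSpace A] (X W : Set (ℤ → A)) (h : ↥X ≃ₜ ↥X) : Prop :=
  ∀ p : ↥X,
    ((p : ℤ → A) ∈ shiftSet (-1) W → ((h p : ℤ → A)) = shiftFun 1 (p : ℤ → A)) ∧
    ((p : ℤ → A) ∈ W → ((h p : ℤ → A)) = shiftFun (-1) (p : ℤ → A)) ∧
    ((p : ℤ → A) ∉ shiftSet (-1) W ∪ W → h p = p)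

set_option linter.unusedSectionVars false
section Aux
variable {A : Type*} [TopologicalSpace A]

lemma shift_shift (i j : ℤ) (y : ℤ → A) : shiftFun i (shiftFun j y) = shiftFun (i + j) y := by
  funext t; simp [shiftFun, add_assoc]

lemma shift_zero (y : ℤ → A) : shiftFun 0 y = y := by funext t; simp [shiftFun]

lemma shift_neg_shift (i : ℤ) (y : ℤ → A) : shiftFun (-i) (shiftFun i y) = y := by
  rw [shift_shift]; simp [shift_zero]

lemma shift_shift_neg (i : ℤ) (y : ℤ → A) : shiftFun i (shiftFun (-i) y) = y := by
  rw [shift_shift]; simp [shift_zero]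

lemma shiftSet_zero (W : Set (ℤ → A)) : shiftSet 0 W = W := by
  have h : shiftFun (0:ℤ) = (id : (ℤ → A) → (ℤ → A)) := funext shift_zero
  simp [shiftSet, h]

lemma mem_shiftSet {W : Set (ℤ → A)} {i : ℤ} {y : ℤ → A} :
    y ∈ shiftSet i W ↔ shiftFun (-i) y ∈ W := by
  constructor
  · rintro ⟨w, hw, rfl⟩; rwa [shift_neg_shift]
  · intro h; exact ⟨shiftFun (-i) y, h, shift_shift_neg i y⟩

lemma shiftSet_shiftSet (i j : ℤ) (W : Set (ℤ → A)) :
    shiftSet i (shiftSet j W) = shiftSet (i + j) W := by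
  show shiftFun i '' (shiftFun j '' W) = _
  rw [← Set.image_comp]
  exact congrArg (· '' W) (funext (shift_shift i j))

lemma shiftFun_continuous (i : ℤ) : Continuous (shiftFun i : (ℤ → A) → ℤ → A) :=
  continuous_pi fun t => continuous_apply (t + i)

end Aux

section Swap
open Classical
variable {A : Type*} [TopologicalSpace A] (X : Set (ℤ → A))
  (hinv : ∀ (i : ℤ) ⦃p : ℤ → A⦄, p ∈ X → shiftFun i p ∈ X)
  (W V : Set (ℤ → A))

noncomputable def swapFun : ↥X → ↥X := fun p =>
  if (p : ℤ → A) ∈ W then ⟨shiftFun 1 (p : ℤ → A), hinv 1 p.2⟩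
  else if (p : ℤ → A) ∈ V then ⟨shiftFun (-1) (p : ℤ → A), hinv (-1) p.2⟩
  else p

lemma swapFun_of_mem_W {p : ↥X} (hp : (p : ℤ → A) ∈ W) :
    ((swapFun X hinv W V p : ↥X) : ℤ → A) = shiftFun 1 (p : ℤ → A) := by
  simp [swapFun, hp]

lemma swapFun_of_mem_V (hd : Disjoint W V) {p : ↥X} (hp : (p : ℤ → A) ∈ V) :
    ((swapFun X hinv W V p : ↥X) : ℤ → A) = shiftFun (-1) (p : ℤ → A) := by
  have hW : (p : ℤ → A) ∉ W := fun h => (Set.disjoint_left.mp hd h) hp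
  simp [swapFun, hW, hp]

lemma swapFun_of_not_mem {p : ↥X} (hp : (p : ℤ → A) ∉ W ∪ V) :
    swapFun X hinv W V p = p := by
  simp only [Set.mem_union] at hp
  push_neg at hp
  simp [swapFun, hp.1, hp.2]

lemma swapFun_involutive (hV : shiftSet 1 W = V) (hd : Disjoint W V) :
    Function.Involutive (swapFun X hinv W V) := by
  intro p
  by_cases hpW : (p : ℤ → A) ∈ W
  · have h1 := swapFun_of_mem_W X hinv W V hpW
    have hmemV : ((swapFun X hinv W V p : ↥X) : ℤ → A) ∈ V := by
      rw [h1, ← hV]; exact Set.mem_image_of_mem _ hpW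
    have h2 := swapFun_of_mem_V X hinv W V hd hmemV
    apply Subtype.ext
    rw [h2, h1, shift_neg_shift]
  · by_cases hpV : (p : ℤ → A) ∈ V
    · have h1 := swapFun_of_mem_V X hinv W V hd hpV
      have hmemW : ((swapFun X hinv W V p : ↥X) : ℤ → A) ∈ W := by
        rw [h1]
        subst hV
        exact mem_shiftSet.mp hpV
      have h2 := swapFun_of_mem_W X hinv W V hmemW
      apply Subtype.ext
      rw [h2, h1, shift_shift_neg]
    · have h1 := swapFun_of_not_mem X hinv W V (p := p) (by simp [hpW, hpV])
      rw [h1, h1]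

lemma swapFun_continuous (hclW : IsClopen (Subtype.val ⁻¹' W : Set ↥X))
    (hclV : IsClopen (Subtype.val ⁻¹' V : Set ↥X)) :
    Continuous (swapFun X hinv W V) := by
  unfold swapFun
  apply Continuous.if
  · intro a ha
    have he : frontier {x : ↥X | (x : ℤ → A) ∈ W} = ∅ := hclW.frontier_eq
    rw [he] at ha
    exact absurd ha (Set.notMem_empty a)
  · exact Continuous.subtype_mk ((shiftFun_continuous 1).comp continuous_subtype_val) _
  · apply Continuous.if
    · intro a ha
      have he : frontier {x : ↥X | (x : ℤ → A) ∈ V} = ∅ := hclV.frontier_eq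
      rw [he] at ha
      exact absurd ha (Set.notMem_empty a)
    · exact Continuous.subtype_mk ((shiftFun_continuous (-1)).comp continuous_subtype_val) _
    · exact continuous_id

noncomputable def swapHomeo (hV : shiftSet 1 W = V) (hd : Disjoint W V)
    (hclW : IsClopen (Subtype.val ⁻¹' W : Set ↥X))
    (hclV : IsClopen (Subtype.val ⁻¹' V : Set ↥X)) : ↥X ≃ₜ ↥X :=
  { toEquiv := Function.Involutive.toPerm _ (swapFun_involutive X hinv W V hV hd)
    continuous_toFun := swapFun_continuous X hinv W V hclW hclV
    continuous_invFun := swapFun_continuous X hinv W V hclW hclV }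

lemma swapHomeo_apply (hV : shiftSet 1 W = V) (hd : Disjoint W V)
    (hclW : IsClopen (Subtype.val ⁻¹' W : Set ↥X))
    (hclV : IsClopen (Subtype.val ⁻¹' V : Set ↥X)) (p : ↥X) :
    swapHomeo X hinv W V hV hd hclW hclV p = swapFun X hinv W V p := rfl



lemma swap_package (hinv : ∀ (i : ℤ) ⦃p : ℤ → A⦄, p ∈ X → shiftFun i p ∈ X) (hV : shiftSet 1 W = V) (hd : Disjoint W V)
    (hclW : IsClopen (Subtype.val ⁻¹' W : Set ↥X))
    (hclV : IsClopen (Subtype.val ⁻¹' V : Set ↥X)) :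
    ∃ T : ↥X ≃ₜ ↥X,
      (∀ p : ↥X, (p : ℤ → A) ∈ W → ((T p : ↥X) : ℤ → A) = shiftFun 1 (p : ℤ → A)) ∧
      (∀ p : ↥X, (p : ℤ → A) ∈ V → ((T p : ↥X) : ℤ → A) = shiftFun (-1) (p : ℤ → A)) ∧
      (∀ p : ↥X, (p : ℤ → A) ∉ W ∪ V → T p = p) ∧
      T * T = 1 ∧ InFullGroup X T := by
  refine ⟨swapHomeo X hinv W V hV hd hclW hclV,
    fun p hp => swapFun_of_mem_W X hinv W V hp,
    fun p hp => swapFun_of_mem_V X hinv W V hd hp,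
    fun p hp => swapFun_of_not_mem X hinv W V hp, ?_, ?_⟩
  · apply Homeomorph.ext
    intro p
    exact swapFun_involutive X hinv W V hV hd p
  · classical
    refine ⟨fun p => if (p : ℤ → A) ∈ W then 1 else if (p : ℤ → A) ∈ V then -1 else 0, ?_, ?_⟩
    · apply Continuous.if
      · intro a ha
        have he : frontier {x : ↥X | (x : ℤ → A) ∈ W} = ∅ := hclW.frontier_eq
        rw [he] at ha
        exact absurd ha (Set.notMem_empty a)
      · exact continuous_const
      · apply Continuous.if
        · intro a ha
          have he : frontier {x : ↥X | (x : ℤ → A) ∈ V} = ∅ := hclV.frontier_eq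
          rw [he] at ha
          exact absurd ha (Set.notMem_empty a)
        · exact continuous_const
        · exact continuous_const
    · intro p
      by_cases h1 : (p : ℤ → A) ∈ W
      · simp only [h1, if_true]
        exact swapFun_of_mem_W X hinv W V h1
      · by_cases h2 : (p : ℤ → A) ∈ V
        · simp only [h1, h2, if_true, if_false]
          exact swapFun_of_mem_V X hinv W V hd h2
        · simp only [h1, h2, if_false]
          have e := swapFun_of_not_mem X hinv W V (p := p) (by simp [h1, h2])
          calc ((swapHomeo X hinv W V hV hd hclW hclV p : ↥X) : ℤ → A)
              = (p : ℤ → A) := congrArg Subtype.val e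
            _ = shiftFun 0 (p : ℤ → A) := (shift_zero _).symm

end Swap

/-- for a nonempty clopen `U ⊆ X` with `σ⁻¹(U), U, σ(U)` pairwise disjoint,
the map `f_U` is a well-defined element of the topological full group `⟦σ⟧`, lies in the
derived subgroup `⟦σ⟧′`, and satisfies `f_U = f_U⁻¹ h_U⁻¹ f_U h_U`. -/
theorem stmt13 {A : Type*} [Fintype A] [TopologicalSpace A] [DiscreteTopology A]
    (x : ℤ → A) (hUR : UniformlyRecurrent x) (hNP : ¬ PeriodicWord x)
    (X : Set (ℤ → A)) (hX : X = closure (Set.range fun n : ℤ => shiftFun n x))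
    (U : Set (ℤ → A)) (hUX : U ⊆ X) (hUne : U.Nonempty)
    (hclopen : IsClopen (Subtype.val ⁻¹' U : Set ↥X))
    (hdisj : ∀ i j : ℤ, -1 ≤ i → i ≤ 1 → -1 ≤ j → j ≤ 1 → i ≠ j →
      Disjoint (shiftSet i U) (shiftSet j U)) :
    ∃ g h : ↥X ≃ₜ ↥X, IsFOn X U g ∧ IsHOn X U h ∧
      InFullGroup X g ∧ InFullGroup X h ∧
      g = g⁻¹ * h⁻¹ * g * h ∧
      g ∈ ⁅Subgroup.closure {k : ↥X ≃ₜ ↥X | InFullGroup X k},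
           Subgroup.closure {k : ↥X ≃ₜ ↥X | InFullGroup X k}⁆ := by
  classical
  have hinv : ∀ (i : ℤ) ⦃p : ℤ → A⦄, p ∈ X → shiftFun i p ∈ X := by
    intro i p hp
    rw [hX] at hp ⊢
    refine map_mem_closure (shiftFun_continuous i) hp ?_
    rintro q ⟨n, rfl⟩
    exact ⟨i + n, (shift_shift i n x).symm⟩
  have mulApp : ∀ (a b : ↥X ≃ₜ ↥X) (p : ↥X), (a * b) p = a (b p) := fun _ _ _ => rfl
  have hclShift : ∀ i : ℤ, IsClopen (Subtype.val ⁻¹' (shiftSet i U) : Set ↥X) := by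
    intro i
    have hcont : Continuous (fun p : ↥X => (⟨shiftFun (-i) (p : ℤ → A), hinv (-i) p.2⟩ : ↥X)) :=
      Continuous.subtype_mk ((shiftFun_continuous (-i)).comp continuous_subtype_val) _
    have heq : (Subtype.val ⁻¹' (shiftSet i U) : Set ↥X)
        = (fun p : ↥X => (⟨shiftFun (-i) (p : ℤ → A), hinv (-i) p.2⟩ : ↥X)) ⁻¹'
          (Subtype.val ⁻¹' U) := by
      ext p
      simp [Set.mem_preimage, mem_shiftSet]
    rw [heq]
    exact hclopen.preimage hcont
  have D01 : Disjoint U (shiftSet 1 U) := by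
    have := hdisj 0 1 (by norm_num) (by norm_num) (by norm_num) (by norm_num) (by norm_num)
    rwa [shiftSet_zero] at this
  have Dm0 : Disjoint (shiftSet (-1) U) U := by
    have := hdisj (-1) 0 (by norm_num) (by norm_num) (by norm_num) (by norm_num) (by norm_num)
    rwa [shiftSet_zero] at this
  have Dm1 : Disjoint (shiftSet (-1) U) (shiftSet 1 U) :=
    hdisj (-1) 1 (by norm_num) (by norm_num) (by norm_num) (by norm_num) (by norm_num)
  have hVU : shiftSet 1 (shiftSet (-1) U) = U := by
    rw [shiftSet_shiftSet]
    norm_num [shiftSet_zero]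
  obtain ⟨h, hA, hB, hC, hh1, hFull⟩ :=
    swap_package X (shiftSet (-1) U) U hinv hVU Dm0 (hclShift (-1)) hclopen
  obtain ⟨h', h'A, h'B, h'C, h'1, h'Full⟩ :=
    swap_package X U (shiftSet 1 U) hinv rfl D01 hclopen (hclShift 1)
  -- membership helpers
  have memU_of_m1 : ∀ {y : ℤ → A}, y ∈ shiftSet (-1) U → shiftFun 1 y ∈ U := by
    intro y hy
    have := mem_shiftSet.mp hy
    norm_num at this
    exact this
  have memU_of_p1 : ∀ {y : ℤ → A}, y ∈ shiftSet 1 U → shiftFun (-1) y ∈ U := by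
    intro y hy
    exact mem_shiftSet.mp hy
  have notW : ∀ {y : ℤ → A}, y ∈ shiftSet 1 U → y ∉ shiftSet (-1) U ∪ U := by
    intro y hy hc
    rcases hc with hc | hc
    · exact Set.disjoint_left.mp Dm1 hc hy
    · exact Set.disjoint_left.mp D01 hc hy
  have notV : ∀ {y : ℤ → A}, y ∈ shiftSet (-1) U → y ∉ U ∪ shiftSet 1 U := by
    intro y hy hc
    rcases hc with hc | hc
    · exact Set.disjoint_left.mp Dm0 hy hc
    · exact Set.disjoint_left.mp Dm1 hy hc
  -- IsFOn for g = h * h'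
  have hF : IsFOn X U (h * h') := by
    intro p
    refine ⟨?_, ?_, ?_⟩
    · rintro (hpU | hpm)
      · have e1 := h'A p hpU
        have hmem : ((h' p : ↥X) : ℤ → A) ∈ shiftSet 1 U := by
          rw [e1]; exact Set.mem_image_of_mem _ hpU
        have e2 := hC _ (notW hmem)
        rw [mulApp, e2, e1]
      · have e1 := h'C p (notV hpm)
        rw [mulApp, e1]
        exact hA p hpm
    · intro hp
      have e1 := h'B p hp
      have hmem : ((h' p : ↥X) : ℤ → A) ∈ U := by
        rw [e1]; exact memU_of_p1 hp
      have e2 := hB _ hmem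
      rw [mulApp, e2, e1, shift_shift]
      norm_num
    · intro hp
      simp only [Set.mem_union] at hp
      push_neg at hp
      have e1 := h'C p (by
        intro hc
        rcases hc with hc | hc
        · exact hp.1.1 hc
        · exact hp.2 hc)
      rw [mulApp, e1]
      exact hC p (by
        intro hc
        rcases hc with hc | hc
        · exact hp.1.2 hc
        · exact hp.1.1 hc)
  have hH : IsHOn X U h := fun p => ⟨hA p, hB p, hC p⟩
  -- full group membership for g
  have hGFull : InFullGroup X (h * h') := by
    refine ⟨fun p => if (p : ℤ → A) ∈ U ∪ shiftSet (-1) U then 1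
      else if (p : ℤ → A) ∈ shiftSet 1 U then -2 else 0, ?_, ?_⟩
    · apply Continuous.if
      · intro a ha
        have hcl : IsClopen (Subtype.val ⁻¹' (U ∪ shiftSet (-1) U) : Set ↥X) := by
          rw [Set.preimage_union]
          exact hclopen.union (hclShift (-1))
        have he : frontier {q : ↥X | (q : ℤ → A) ∈ U ∪ shiftSet (-1) U} = ∅ := hcl.frontier_eq
        rw [he] at ha
        exact absurd ha (Set.notMem_empty a)
      · exact continuous_const
      · apply Continuous.if
        · intro a ha
          have he : frontier {q : ↥X | (q : ℤ → A) ∈ shiftSet 1 U} = ∅ :=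
            (hclShift 1).frontier_eq
          rw [he] at ha
          exact absurd ha (Set.notMem_empty a)
        · exact continuous_const
        · exact continuous_const
    · intro p
      obtain ⟨c1, c2, c3⟩ := hF p
      by_cases h1 : (p : ℤ → A) ∈ U ∪ shiftSet (-1) U
      · simp only [h1, if_true]
        exact c1 h1
      · by_cases h2 : (p : ℤ → A) ∈ shiftSet 1 U
        · simp only [h1, h2, if_true, if_false]
          exact c2 h2
        · simp only [h1, h2, if_false]
          have e := c3 (by
            intro hc
            rcases hc with hc | hc
            · exact h1 hc
            · exact h2 hc)
          calc (((h * h') p : ↥X) : ℤ → A) = (p : ℤ → A) := congrArg Subtype.val e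
            _ = shiftFun 0 (p : ℤ → A) := (shift_zero _).symm
  -- the commutation relation h * (g * g) = g * h, pointwise
  have hE : h * ((h * h') * (h * h')) = (h * h') * h := by
    apply Homeomorph.ext
    intro p
    show h ((h * h') ((h * h') p)) = (h * h') (h p)
    obtain ⟨c1, c2, c3⟩ := hF p
    by_cases hpU : (p : ℤ → A) ∈ U
    · -- g p = σ p ∈ σU ; g² p = σ⁻¹ p ∈ σ⁻¹U ; h (g² p) = p ; g (h p) = g(σ⁻¹p) = p
      have e1 := c1 (Or.inl hpU)
      have m1 : (((h * h') p : ↥X) : ℤ → A) ∈ shiftSet 1 U := by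
        rw [e1]; exact Set.mem_image_of_mem _ hpU
      obtain ⟨d1, d2, d3⟩ := hF ((h * h') p)
      have e2 := d2 m1
      have m2 : ((((h * h') ((h * h') p)) : ↥X) : ℤ → A) ∈ shiftSet (-1) U := by
        rw [e2, e1]
        have : shiftFun (-2 : ℤ) (shiftFun 1 (p : ℤ → A)) = shiftFun (-1) (p : ℤ → A) := by
          rw [shift_shift]; norm_num
        rw [this]
        exact Set.mem_image_of_mem _ hpU
      have e3 := hA _ m2
      have e4 := hB p hpU
      have m3 : ((h p : ↥X) : ℤ → A) ∈ shiftSet (-1) U := by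
        rw [e4]; exact Set.mem_image_of_mem _ hpU
      obtain ⟨f1, f2, f3⟩ := hF (h p)
      have e5 := f1 (Or.inr m3)
      apply Subtype.ext
      rw [e3, e2, e1, e5, e4]
      simp only [shift_shift]
      norm_num
    · by_cases hpm : (p : ℤ → A) ∈ shiftSet (-1) U
      · have e1 := c1 (Or.inr hpm)
        have m1 : (((h * h') p : ↥X) : ℤ → A) ∈ U := by
          rw [e1]; exact memU_of_m1 hpm
        obtain ⟨d1, d2, d3⟩ := hF ((h * h') p)
        have e2 := d1 (Or.inl m1)
        have m2 : ((((h * h') ((h * h') p)) : ↥X) : ℤ → A) ∈ shiftSet 1 U := by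
          rw [e2]; exact Set.mem_image_of_mem _ m1
        have e3 := hC _ (notW m2)
        have e4 := hA p hpm
        have m3 : ((h p : ↥X) : ℤ → A) ∈ U := by
          rw [e4]; exact memU_of_m1 hpm
        obtain ⟨f1, f2, f3⟩ := hF (h p)
        have e5 := f1 (Or.inl m3)
        apply Subtype.ext
        rw [e3, e2, e1, e5, e4]
      · by_cases hpp : (p : ℤ → A) ∈ shiftSet 1 U
        · have e1 := c2 hpp
          have m1 : (((h * h') p : ↥X) : ℤ → A) ∈ shiftSet (-1) U := by
            rw [e1]
            rw [mem_shiftSet]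
            have : shiftFun (-(-1) : ℤ) (shiftFun (-2) (p : ℤ → A))
                = shiftFun (-1) (p : ℤ → A) := by
              rw [shift_shift]; norm_num
            rw [this]
            exact memU_of_p1 hpp
          obtain ⟨d1, d2, d3⟩ := hF ((h * h') p)
          have e2 := d1 (Or.inr m1)
          have m2 : ((((h * h') ((h * h') p)) : ↥X) : ℤ → A) ∈ U := by
            rw [e2, e1]
            have : shiftFun (1 : ℤ) (shiftFun (-2) (p : ℤ → A))
                = shiftFun (-1) (p : ℤ → A) := by
              rw [shift_shift]; norm_num
            rw [this]
            exact memU_of_p1 hpp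
          have e3 := hB _ m2
          have e4 := hC p (notW hpp)
          apply Subtype.ext
          rw [e3, e2, e1, e4, e1]
          simp only [shift_shift]
          norm_num
        · have e1 := c3 (by
            intro hc
            rcases hc with (hc | hc) | hc
            · exact hpU hc
            · exact hpm hc
            · exact hpp hc)
          have e4 := hC p (by
            intro hc
            rcases hc with hc | hc
            · exact hpm hc
            · exact hpU hc)
          rw [e4, e1, e1]
          exact e4
  have hhinv : h⁻¹ = h := inv_eq_of_mul_eq_one_left hh1
  have hEq : (h * h') = (h * h')⁻¹ * h⁻¹ * (h * h') * h := by
    rw [hhinv]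
    have calc1 : (h * h')⁻¹ * h * ((h * h') * h)
        = (h * h')⁻¹ * h * (h * ((h * h') * (h * h'))) := by rw [hE]
    have calc2 : (h * h')⁻¹ * h * (h * ((h * h') * (h * h')))
        = (h * h')⁻¹ * (h * h) * ((h * h') * (h * h')) := by group
    rw [hh1] at calc2
    have calc3 : (h * h')⁻¹ * 1 * ((h * h') * (h * h')) = h * h' := by group
    have final : (h * h')⁻¹ * h * ((h * h') * h) = h * h' := by
      rw [calc1, calc2, calc3]
    calc h * h' = (h * h')⁻¹ * h * ((h * h') * h) := final.symm
      _ = (h * h')⁻¹ * h * (h * h') * h := by group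
  refine ⟨h * h', h, hF, hH, hGFull, hFull, hEq, ?_⟩
  open scoped commutatorElement in
  have hcomm : (h * h') = ⁅(h * h')⁻¹, h⁻¹⁆ := by
    rw [commutatorElement_def, inv_inv, inv_inv]
    exact hEq
  rw [hcomm]
  exact Subgroup.commutator_mem_commutator
    (Subgroup.inv_mem _ (Subgroup.subset_closure hGFull))
    (Subgroup.inv_mem _ (Subgroup.subset_closure hFull))
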